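/- Let r ≥ 4, 0 < k < r−2, and suppose M_k, M_{r−2}, M_r > 0 satisfy M_{r−2} ≤ (‖φ₂‖/‖φ_{r−k}‖^{2/(r−k)}) M_k^{2/(r−k)} M_r^{(r−k−2)/(r−k)} and M₀ ≥ ‖Ψ_r(M_k,M_{r−2},M_r)‖. Then the function x(t) := Ψ_r(M_k,M_{r−2},M_r;t) + M₀ − ‖Ψ_r(M_k,M_{r−2},M_r)‖ satisfies ‖x‖ = M₀, ‖x^{(k)}‖ = M_k, ‖x^{(r−2)}‖ = M_{r−2}, ‖x^{(r)}‖ = M_r. -/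

import Mathlib

open MeasureTheory intervalIntegral Set

/-- essential sup norm on ℝ, as a real number -/
noncomputable def nrm (f : ℝ → ℝ) : ℝ := (eLpNorm f ⊤ volume).toReal

/-- supremum norm on ℝ -/
noncomputable def supNorm (f : ℝ → ℝ) : ℝ := ⨆ t, |f t|

/-- ψ₁ on the base interval [0, a+2] -/
noncomputable def psi1base (a t : ℝ) : ℝ :=
  if t ≤ 1 then t - 1 else if t ≤ a + 1 then 0 else t - a - 1

/-- ψ₁(a;·): even (4+2a)-periodic extension of `psi1base a` -/
noncomputable def psi1 (a : ℝ) : ℝ → ℝ := fun t =>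
  let T := 4 + 2 * a
  let s := t - T * ⌊t / T⌋
  if s ≤ a + 2 then psi1base a s else psi1base a (T - s)

/-- ψ₂ on the base interval [0, a+2] -/
noncomputable def psi2base (a t : ℝ) : ℝ :=
  if t ≤ 1 then (t - 1) ^ 2 / 2 - 1 / 2
  else if t ≤ a + 1 then -(1 / 2)
  else (t - a - 1) ^ 2 / 2 - 1 / 2

/-- ψ₂(a;·): odd (4+2a)-periodic extension of `psi2base a` -/
noncomputable def psi2 (a : ℝ) : ℝ → ℝ := fun t =>
  let T := 4 + 2 * a
  let s := t - T * ⌊t / T⌋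
  if s ≤ a + 2 then psi2base a s else -psi2base a (T - s)

/-- `IsPsi a r f` : f is the (r-1)-th (4+2a)-periodic integral with zero mean
of ψ₁(a;·), i.e. f = ψ_r(a;·). -/
def IsPsi (a : ℝ) : ℕ → (ℝ → ℝ) → Prop
  | 0, _ => False
  | 1, f => f = psi1 a
  | (n + 2), f => ∃ g, IsPsi a (n + 1) g ∧
      (∀ s t : ℝ, f t - f s = ∫ u in s..t, g u) ∧
      (∫ t in (0:ℝ)..(4 + 2 * a), f t) = 0

/-- φ₀(t) = sgn (sin t) -/
noncomputable def phi0 (t : ℝ) : ℝ := Real.sign (Real.sin t)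

/-- `IsPhi r f` : f is the Euler perfect spline φ_r, the r-th 2π-periodic
integral with zero mean of φ₀. -/
noncomputable def IsPhi : ℕ → (ℝ → ℝ) → Prop
  | 0, f => f = phi0
  | (n + 1), f => ∃ g, IsPhi n g ∧
      (∀ s t : ℝ, f t - f s = ∫ u in s..t, g u) ∧
      (∫ t in (0:ℝ)..(2 * Real.pi), f t) = 0

/-- membership in L^r_{∞,∞}(ℝ): x^{(r-1)} locally absolutely continuous,
x and x^{(r)} essentially bounded. -/
def MemL (r : ℕ) (x : ℝ → ℝ) : Prop :=
  ContDiff ℝ (r - 1 : ℕ) x ∧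
  (∀ s t : ℝ, iteratedDeriv (r - 1) x t - iteratedDeriv (r - 1) x s =
      ∫ u in s..t, iteratedDeriv r x u) ∧
  MemLp x ⊤ volume ∧ MemLp (iteratedDeriv r x) ⊤ volume

/-- the spline Ψ_{a,b,λ}(t) = b · f(λ t), where f = ψ_r(a;·) -/
noncomputable def Psi (b lam : ℝ) (f : ℝ → ℝ) : ℝ → ℝ := fun t => b * f (lam * t)

-- Auxiliary lemmas
open ENNReal NNReal


lemma psi1base_eq {a : ℝ} (ha : 0 ≤ a) (t : ℝ) :
    psi1base a t = max 0 (t - a - 1) + min 0 (t - 1) := by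
  unfold psi1base
  split_ifs with h1 h2
  · rw [max_eq_left (by linarith), min_eq_right (by linarith)]; ring
  · rw [max_eq_left (by linarith), min_eq_left (by linarith)]; ring
  · rw [max_eq_right (by linarith), min_eq_left (by linarith)]; ring

lemma negmin (x : ℝ) : max 0 (-x) = -min 0 x := by
  rcases le_total x 0 with h | h
  · rw [min_eq_right h, max_eq_right (by linarith)]
  · rw [min_eq_left h, max_eq_left (by linarith), neg_zero]

lemma negmax (x : ℝ) : min 0 (-x) = -max 0 x := by
  rcases le_total x 0 with h | h
  · rw [max_eq_left h, min_eq_left (by linarith), neg_zero]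
  · rw [max_eq_right h, min_eq_right (by linarith)]

lemma psi1base_odd {a : ℝ} (ha : 0 ≤ a) (s : ℝ) :
    psi1base a (a + 2 - s) = -psi1base a s := by
  rw [psi1base_eq ha, psi1base_eq ha]
  have e1 : a + 2 - s - a - 1 = -(s - 1) := by ring
  have e2 : a + 2 - s - 1 = -(s - a - 1) := by ring
  rw [e1, e2, negmin, negmax]; ring

lemma psi1base_cont {a : ℝ} (ha : 0 ≤ a) : Continuous (psi1base a) := by
  have : psi1base a = fun t => max 0 (t - a - 1) + min 0 (t - 1) :=
    funext fun t => psi1base_eq ha t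
  rw [this]
  exact (continuous_const.max (by continuity)).add (continuous_const.min (by continuity))

lemma psi1_def (a t : ℝ) : psi1 a t =
    if t - (4 + 2 * a) * ⌊t / (4 + 2 * a)⌋ ≤ a + 2 then
      psi1base a (t - (4 + 2 * a) * ⌊t / (4 + 2 * a)⌋)
    else psi1base a ((4 + 2 * a) - (t - (4 + 2 * a) * ⌊t / (4 + 2 * a)⌋)) := rfl

lemma sfun_mem {a : ℝ} (ha : 0 ≤ a) (t : ℝ) :
    0 ≤ t - (4 + 2 * a) * ⌊t / (4 + 2 * a)⌋ ∧
    t - (4 + 2 * a) * ⌊t / (4 + 2 * a)⌋ < 4 + 2 * a := by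
  have hT : (0:ℝ) < 4 + 2 * a := by linarith
  have h1 := Int.floor_le (t / (4 + 2 * a))
  have h2 := Int.lt_floor_add_one (t / (4 + 2 * a))
  have e : t / (4 + 2 * a) * (4 + 2 * a) = t := div_mul_cancel₀ t hT.ne'
  constructor
  · nlinarith [mul_le_mul_of_nonneg_right h1 hT.le]
  · nlinarith [mul_lt_mul_of_pos_right h2 hT]

lemma psi1_anti {a : ℝ} (ha : 0 ≤ a) (t : ℝ) : psi1 a (t + (a + 2)) = -psi1 a t := by
  have hT : (0:ℝ) < 4 + 2 * a := by linarith
  set T : ℝ := 4 + 2 * a with hTdef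
  set n : ℤ := ⌊t / T⌋ with hn
  set s : ℝ := t - T * n with hs
  obtain ⟨hs0, hsT⟩ := sfun_mem ha t
  rw [← hTdef, ← hn, ← hs] at hs0 hsT
  rcases lt_or_ge s (a + 2) with hcase | hcase
  · -- floor of (t + (a+2))/T equals n
    have hfl : ⌊(t + (a + 2)) / T⌋ = n := by
      rw [Int.floor_eq_iff]
      constructor
      · rw [le_div_iff₀ hT]; nlinarith [hs0]
      · rw [div_lt_iff₀ hT]
        push_cast
        nlinarith [hcase]
    have hs' : t + (a + 2) - T * ⌊(t + (a + 2)) / T⌋ = s + (a + 2) := by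
      rw [hfl, hs]; ring
    rw [psi1_def, psi1_def, ← hTdef, ← hn, ← hs, hs']
    rw [if_pos hcase.le]
    split_ifs with h
    · -- s + (a+2) ≤ a+2, so s = 0
      have hs0' : s = 0 := le_antisymm (by linarith) hs0
      rw [hs0']
      have : (0:ℝ) + (a + 2) = a + 2 - 0 := by ring
      rw [this, psi1base_odd ha]
    · have : T - (s + (a + 2)) = a + 2 - s := by rw [hTdef]; ring
      rw [this, psi1base_odd ha]
  · -- floor equals n + 1
    have hfl : ⌊(t + (a + 2)) / T⌋ = n + 1 := by
      rw [Int.floor_eq_iff]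
      push_cast
      constructor
      · rw [le_div_iff₀ hT]; nlinarith [hcase]
      · rw [div_lt_iff₀ hT]; nlinarith [hsT]
    have hs' : t + (a + 2) - T * ⌊(t + (a + 2)) / T⌋ = s - (a + 2) := by
      rw [hfl, hs]; push_cast; rw [hTdef]; ring
    rw [psi1_def, psi1_def, ← hTdef, ← hn, ← hs, hs']
    rw [if_pos (by linarith : s - (a + 2) ≤ a + 2)]
    have key : psi1base a (a + 2 - (s - (a + 2))) = -psi1base a (s - (a + 2)) :=
      psi1base_odd ha (s - (a + 2))
    have e3 : a + 2 - (s - (a + 2)) = T - s := by rw [hTdef]; ring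
    rw [e3] at key
    split_ifs with h
    · have hsa : s = a + 2 := le_antisymm h hcase
      have : T - s = s := by rw [hTdef, hsa]; ring
      rw [this] at key
      linarith [key]
    · linarith [key]

lemma psi1_meas {a : ℝ} (ha : 0 ≤ a) : Measurable (psi1 a) := by
  have hT : (0:ℝ) < 4 + 2 * a := by linarith
  have hsm : Measurable fun t : ℝ => t - (4 + 2 * a) * ⌊t / (4 + 2 * a)⌋ := by
    have : (fun t : ℝ => t - (4 + 2 * a) * ⌊t / (4 + 2 * a)⌋) =
        fun t : ℝ => (4 + 2 * a) * Int.fract (t / (4 + 2 * a)) := by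
      funext t
      rw [Int.fract]
      field_simp
    rw [this]
    exact measurable_const.mul (measurable_fract.comp (measurable_id.div_const _))
  have := funext fun t => psi1_def a t
  rw [this]
  exact Measurable.ite (measurableSet_le hsm measurable_const)
    ((psi1base_cont ha).measurable.comp hsm)
    ((psi1base_cont ha).measurable.comp (measurable_const.sub hsm))

lemma psi1_bound {a : ℝ} (ha : 0 ≤ a) (t : ℝ) : |psi1 a t| ≤ 2 * (4 + 2 * a) + a + 2 := by
  have hbase : ∀ u : ℝ, 0 ≤ u → u ≤ 4 + 2 * a → |psi1base a u| ≤ 2 * (4 + 2 * a) + a + 2 := by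
    intro u h0 h1
    rw [psi1base_eq ha]
    have l1 : |max 0 (u - a - 1)| ≤ 4 + 2 * a := by
      rw [abs_le]; constructor
      · linarith [le_max_left (0:ℝ) (u - a - 1)]
      · rcases max_choice (0:ℝ) (u - a - 1) with h | h <;> rw [h] <;> linarith
    have l2 : |min 0 (u - 1)| ≤ a + 2 := by
      rw [abs_le]; constructor
      · rcases min_choice (0:ℝ) (u - 1) with h | h <;> rw [h] <;> linarith
      · linarith [min_le_left (0:ℝ) (u - 1)]
    calc |max 0 (u - a - 1) + min 0 (u - 1)| ≤ |max 0 (u - a - 1)| + |min 0 (u - 1)| :=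
          abs_add_le _ _
      _ ≤ 2 * (4 + 2 * a) + a + 2 := by linarith
  obtain ⟨hs0, hsT⟩ := sfun_mem ha t
  rw [psi1_def]
  split_ifs with h
  · exact hbase _ hs0 hsT.le
  · exact hbase _ (by linarith) (by linarith)

lemma psi1_II {a : ℝ} (ha : 0 ≤ a) (u v : ℝ) : IntervalIntegrable (psi1 a) volume u v := by
  rw [intervalIntegrable_iff]
  apply Integrable.mono' (g := fun _ => 2 * (4 + 2 * a) + a + 2)
  · exact integrableOn_const measure_Ioc_lt_top.ne
  · exact ((psi1_meas ha).aestronglyMeasurable).restrict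
  · exact ae_of_all _ fun t => psi1_bound ha t

lemma isPsi_props {a : ℝ} (ha : 0 ≤ a) :
    ∀ (n : ℕ) (f : ℝ → ℝ), IsPsi a n f →
      (∀ t, f (t + (a + 2)) = -f t) ∧ (∀ u v, IntervalIntegrable f volume u v) ∧
      (2 ≤ n → Continuous f)
  | 0, f, h => h.elim
  | 1, f, h => by
      rw [show IsPsi a 1 f = (f = psi1 a) from rfl] at h
      subst h
      exact ⟨psi1_anti ha, psi1_II ha, by omega⟩
  | (n + 2), f, h => by
      obtain ⟨g, hg, hint, hmean⟩ := h
      obtain ⟨ganti, gII, -⟩ := isPsi_props ha (n + 1) g hg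
      have hL : (0:ℝ) < a + 2 := by linarith
      have hcont : Continuous f := by
        have hfe : f = fun t => f 0 + ∫ u in (0:ℝ)..t, g u := by
          funext t
          have := hint 0 t
          linarith
        rw [hfe]
        exact continuous_const.add (intervalIntegral.continuous_primitive gII 0)
      have hII : ∀ u v, IntervalIntegrable f volume u v :=
        fun u v => hcont.intervalIntegrable u v
      have hconst : ∀ t, f (t + (a + 2)) + f t = f (0 + (a + 2)) + f 0 := by
        intro t
        have h1 := hint (0 + (a + 2)) (t + (a + 2))
        have h2 := hint 0 t
        have h3 : (∫ u in (0:ℝ)..t, g (u + (a + 2))) =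
            ∫ u in (0 + (a + 2))..(t + (a + 2)), g u :=
          intervalIntegral.integral_comp_add_right g (a + 2)
        have h4 : (∫ u in (0:ℝ)..t, g (u + (a + 2))) = -∫ u in (0:ℝ)..t, g u := by
          rw [← intervalIntegral.integral_neg]
          congr 1
          funext u
          exact ganti u
        rw [← h3, h4] at h1
        linarith
      have hK : f (0 + (a + 2)) + f 0 = 0 := by
        set K : ℝ := f (0 + (a + 2)) + f 0 with hKdef
        have hsplit : (∫ t in (0:ℝ)..(a + 2), f t) + (∫ t in (a + 2)..(4 + 2 * a), f t) =
            ∫ t in (0:ℝ)..(4 + 2 * a), f t :=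
          intervalIntegral.integral_add_adjacent_intervals (hII 0 (a + 2)) (hII (a + 2) (4 + 2 * a))
        have h5 : (∫ t in (0:ℝ)..(a + 2), f (t + (a + 2))) =
            ∫ t in (a + 2)..(4 + 2 * a), f t := by
          rw [intervalIntegral.integral_comp_add_right f (a + 2)]
          norm_num
          ring_nf
        have h6 : (∫ t in (0:ℝ)..(a + 2), f (t + (a + 2))) =
            ∫ t in (0:ℝ)..(a + 2), (K - f t) := by
          apply intervalIntegral.integral_congr
          intro t _
          have := hconst t
          simp only
          linarith
        have h7 : (∫ t in (0:ℝ)..(a + 2), (K - f t)) =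
            (a + 2) * K - ∫ t in (0:ℝ)..(a + 2), f t := by
          rw [intervalIntegral.integral_sub (intervalIntegrable_const) (hII 0 (a + 2))]
          rw [intervalIntegral.integral_const]
          simp [smul_eq_mul]
        have : (a + 2) * K = 0 := by
          rw [h6, h7] at h5
          rw [← hsplit] at hmean
          linarith
        exact (mul_eq_zero.mp this).resolve_left (by linarith)
      refine ⟨fun t => by have := hconst t; linarith, hII, fun _ => hcont⟩


lemma nrm_le_of_bound (h : ℝ → ℝ) (B : ℝ) (hB0 : 0 ≤ B) (hB : ∀ t, |h t| ≤ B) :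
    nrm h ≤ B := by
  unfold nrm
  rw [eLpNorm_exponent_top]
  have hle : eLpNormEssSup h volume ≤ ENNReal.ofReal B :=
    eLpNormEssSup_le_of_ae_bound (ae_of_all _ fun t => by simpa using hB t)
  calc (eLpNormEssSup h volume).toReal ≤ (ENNReal.ofReal B).toReal :=
        ENNReal.toReal_mono ENNReal.ofReal_ne_top hle
    _ = B := ENNReal.toReal_ofReal hB0

lemma le_nrm_of_cont (h : ℝ → ℝ) (hc : Continuous h) (B : ℝ)
    (hB : ∀ t, |h t| ≤ B) (t₀ : ℝ) : |h t₀| ≤ nrm h := by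
  have hfin : eLpNormEssSup h volume ≤ ENNReal.ofReal B :=
    eLpNormEssSup_le_of_ae_bound (ae_of_all _ fun t => by simpa using hB t)
  have hfin' : eLpNormEssSup h volume ≠ ⊤ :=
    ne_top_of_le_ne_top ENNReal.ofReal_ne_top hfin
  have key : (‖h t₀‖₊ : ℝ≥0∞) ≤ eLpNormEssSup h volume := by
    by_contra hlt
    push_neg at hlt
    set U : Set ℝ := {u | eLpNormEssSup h volume < (‖h u‖₊ : ℝ≥0∞)} with hU
    have hopen : IsOpen U := by
      have : Continuous fun u : ℝ => (‖h u‖₊ : ℝ≥0∞) :=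
        ENNReal.continuous_coe.comp (continuous_nnnorm.comp hc)
      exact isOpen_Ioi.preimage this
    have hpos : 0 < volume U := hopen.measure_pos volume ⟨t₀, hlt⟩
    have hnull : volume U = 0 := by
      have := enorm_ae_le_eLpNormEssSup h volume
      rw [MeasureTheory.ae_iff] at this
      convert this using 2
      ext u
      simp [hU, not_le]; rfl
    rw [hnull] at hpos
    exact lt_irrefl _ hpos
  have := ENNReal.toReal_mono hfin' key
  simpa [nrm, eLpNorm_exponent_top] using this

lemma nrm_anti (h : ℝ → ℝ) (hc : Continuous h) (P : ℝ) (hP : 0 < P)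
    (hanti : ∀ t, h (t + P) = -h t) (C : ℝ) (hC : 0 ≤ C) :
    (∃ B, (∀ t, |h t| ≤ B) ∧ nrm h = B) ∧ nrm (fun t => h t + C) = nrm h + C := by
  have hper : Function.Periodic h (2 * P) := by
    intro t
    have h1 := hanti t
    have h2 := hanti (t + P)
    have e : t + P + P = t + 2 * P := by ring
    rw [e] at h2
    rw [h2, h1, neg_neg]
  -- reduce any point into [0, 2P]
  have hred : ∀ t, ∃ u, u ∈ Icc (0:ℝ) (2 * P) ∧ h t = h u := by
    intro t
    have hQ : (0:ℝ) < 2 * P := by linarith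
    refine ⟨t - (⌊t / (2 * P)⌋ : ℝ) * (2 * P), ?_, (hper.sub_int_mul_eq ⌊t / (2 * P)⌋).symm⟩
    have h1 := Int.floor_le (t / (2 * P))
    have h2 := Int.lt_floor_add_one (t / (2 * P))
    have e : t / (2 * P) * (2 * P) = t := div_mul_cancel₀ t hQ.ne'
    constructor
    · nlinarith [mul_le_mul_of_nonneg_right h1 hQ.le]
    · nlinarith [mul_lt_mul_of_pos_right h2 hQ]
  -- max of |h| on the compact interval
  obtain ⟨t₁, -, hmax⟩ := (isCompact_Icc (a := (0:ℝ)) (b := 2 * P)).exists_isMaxOn (f := fun u => |h u|)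
    (nonempty_Icc.mpr (by linarith)) (hc.abs.continuousOn)
  set S : ℝ := |h t₁| with hS
  have hbound : ∀ t, |h t| ≤ S := by
    intro t
    obtain ⟨u, hu, he⟩ := hred t
    rw [he]
    exact hmax hu
  have hS0 : 0 ≤ S := abs_nonneg _
  -- a point where h attains S with positive sign
  obtain ⟨t₀, ht₀⟩ : ∃ t₀, h t₀ = S := by
    rcases le_total 0 (h t₁) with hsign | hsign
    · exact ⟨t₁, (abs_of_nonneg hsign).symm⟩
    · exact ⟨t₁ + P, by rw [hanti t₁, hS, abs_of_nonpos hsign]⟩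
  have hnrm : nrm h = S := by
    apply le_antisymm (nrm_le_of_bound h S hS0 hbound)
    calc S = |h t₀| := by rw [ht₀, abs_of_nonneg hS0]
      _ ≤ nrm h := le_nrm_of_cont h hc S hbound t₀
  refine ⟨⟨S, hbound, hnrm⟩, ?_⟩
  have hboundC : ∀ t, |h t + C| ≤ S + C := by
    intro t
    have := hbound t
    rw [abs_le] at this ⊢
    constructor <;> linarith
  have hcC : Continuous fun t => h t + C := hc.add continuous_const
  rw [hnrm]
  apply le_antisymm (nrm_le_of_bound _ (S + C) (by linarith) hboundC)
  calc S + C = |h t₀ + C| := by rw [ht₀, abs_of_nonneg (by linarith)]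
    _ ≤ nrm (fun t => h t + C) := le_nrm_of_cont _ hcC (S + C) hboundC t₀

lemma iteratedDeriv_add_const' (n : ℕ) (hn : 0 < n) (f : ℝ → ℝ) (c : ℝ) :
    iteratedDeriv n (fun t => f t + c) = iteratedDeriv n f := by
  obtain ⟨m, rfl⟩ : ∃ m, n = m + 1 := ⟨n - 1, by omega⟩
  rw [iteratedDeriv_succ', deriv_add_const', ← iteratedDeriv_succ']

theorem stmt18 (r k : ℕ) (hr : 4 ≤ r) (hk : 0 < k) (hkr : k < r - 2)
    (M0 Mk Mr2 Mr : ℝ) (hMk : 0 < Mk) (hMr2 : 0 < Mr2) (hMr : 0 < Mr)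
    (phi2 phirk : ℝ → ℝ) (hphi2 : IsPhi 2 phi2) (hphirk : IsPhi (r - k) phirk)
    (hKol : Mr2 ≤ nrm phi2 / nrm phirk ^ ((2 : ℝ) / ((r : ℝ) - k)) *
      (Mk ^ ((2 : ℝ) / ((r : ℝ) - k)) * Mr ^ (((r : ℝ) - k - 2) / ((r : ℝ) - k))))
    (a b lam : ℝ) (ha : 0 ≤ a) (hb : 0 < b) (hlam : 0 < lam)
    (f : ℝ → ℝ) (hf : IsPsi a r f)
    (hNk : nrm (iteratedDeriv k (Psi b lam f)) = Mk)
    (hNr2 : nrm (iteratedDeriv (r - 2) (Psi b lam f)) = Mr2)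
    (hNr : nrm (iteratedDeriv r (Psi b lam f)) = Mr)
    (hM0 : nrm (Psi b lam f) ≤ M0) :
    nrm (fun t => Psi b lam f t + M0 - nrm (Psi b lam f)) = M0 ∧
    nrm (iteratedDeriv k (fun t => Psi b lam f t + M0 - nrm (Psi b lam f))) = Mk ∧
    nrm (iteratedDeriv (r - 2) (fun t => Psi b lam f t + M0 - nrm (Psi b lam f))) = Mr2 ∧
    nrm (iteratedDeriv r (fun t => Psi b lam f t + M0 - nrm (Psi b lam f))) = Mr := by
  obtain ⟨fanti, -, fcont'⟩ := isPsi_props ha r f hf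
  have fcont : Continuous f := fcont' (by omega)
  have Ψcont : Continuous (Psi b lam f) :=
    continuous_const.mul (fcont.comp (continuous_const.mul continuous_id))
  have hP : 0 < (a + 2) / lam := div_pos (by linarith) hlam
  have Ψanti : ∀ t, Psi b lam f (t + (a + 2) / lam) = -Psi b lam f t := by
    intro t
    show b * f (lam * (t + (a + 2) / lam)) = -(b * f (lam * t))
    have e : lam * (t + (a + 2) / lam) = lam * t + (a + 2) := by
      field_simp
    rw [e, fanti]
    ring
  have hC : 0 ≤ M0 - nrm (Psi b lam f) := by linarith
  obtain ⟨-, hmain⟩ := nrm_anti (Psi b lam f) Ψcont _ hP Ψanti (M0 - nrm (Psi b lam f)) hC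
  have hfun : (fun t => Psi b lam f t + M0 - nrm (Psi b lam f)) =
      fun t => Psi b lam f t + (M0 - nrm (Psi b lam f)) := by
    funext t; ring
  refine ⟨?_, ?_, ?_, ?_⟩
  · rw [hfun, hmain]; ring
  · rw [hfun, iteratedDeriv_add_const' k hk (Psi b lam f) _]; exact hNk
  · rw [hfun, iteratedDeriv_add_const' (r - 2) (by omega) (Psi b lam f) _]; exact hNr2
  · rw [hfun, iteratedDeriv_add_const' r (by omega) (Psi b lam f) _]; exact hNr
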